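/- Let 1 < p < ∞ with p ≠ 2. In the real normed linear space (ℝ², ‖·‖_p) there exists a unit vector (x, y) such that for every vector (u, v), if (x, y) is Birkhoff-James orthogonal to (u, v) and (u, v) is Birkhoff-James orthogonal to (x, y), then u = v = 0. In particular, there is no strongly orthonormal Hamel basis in the sense of Birkhoff-James containing (x, y). -/

import Mathlib

open Real

/-- The derivative of `l ↦ |a + l*b|^p + |c + l*d|^p` vanishes at a minimum. -/
private lemma key_deriv (p : ℝ) (hp : 1 < p) (a b c d : ℝ)
    (h : ∀ l : ℝ, |a| ^ p + |c| ^ p ≤ |a + l * b| ^ p + |c + l * d| ^ p) :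
    |a| ^ (p - 2) * a * b + |c| ^ (p - 2) * c * d = 0 := by
  have hp0 : (0:ℝ) < p := lt_trans one_pos hp
  have h1 : HasDerivAt (fun l : ℝ => |a + l * b| ^ p)
      (p * |a| ^ (p - 2) * a * b) 0 := by
    have hinner : HasDerivAt (fun l : ℝ => a + l * b) b (0:ℝ) :=
      (hasDerivAt_mul_const b).const_add a
    have := (hasDerivAt_abs_rpow (a + 0 * b) hp).comp 0 hinner
    simpa [mul_assoc, Function.comp_def] using this
  have h2 : HasDerivAt (fun l : ℝ => |c + l * d| ^ p)
      (p * |c| ^ (p - 2) * c * d) 0 := by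
    have hinner : HasDerivAt (fun l : ℝ => c + l * d) d (0:ℝ) :=
      (hasDerivAt_mul_const d).const_add c
    have := (hasDerivAt_abs_rpow (c + 0 * d) hp).comp 0 hinner
    simpa [mul_assoc, Function.comp_def] using this
  have hsum := h1.add h2
  have hmin : IsLocalMin (fun l : ℝ => |a + l * b| ^ p + |c + l * d| ^ p) 0 := by
    apply Filter.Eventually.of_forall
    intro l
    simpa using h l
  have hz := hmin.hasDerivAt_eq_zero hsum
  have : p * (|a| ^ (p - 2) * a * b + |c| ^ (p - 2) * c * d) = 0 := by
    rw [mul_add]; rw [← hz]; ring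
  rcases mul_eq_zero.mp this with h' | h'
  · exact absurd h' (ne_of_gt hp0)
  · exact h'

theorem stmt_5 (p : ℝ) (hp : 1 < p) (hp2 : p ≠ 2)
    [Fact (1 ≤ ENNReal.ofReal p)] :
    ∃ v : PiLp (ENNReal.ofReal p) (fun _ : Fin 2 => ℝ), ‖v‖ = 1 ∧
      ∀ u : PiLp (ENNReal.ofReal p) (fun _ : Fin 2 => ℝ),
        (∀ l : ℝ, ‖v‖ ≤ ‖v + l • u‖) → (∀ l : ℝ, ‖u‖ ≤ ‖u + l • v‖) → u = 0 := by
  have hp0 : (0:ℝ) < p := lt_trans one_pos hp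
  have hpne : p ≠ 0 := ne_of_gt hp0
  have htr : (ENNReal.ofReal p).toReal = p := ENNReal.toReal_ofReal hp0.le
  have htr0 : 0 < (ENNReal.ofReal p).toReal := by rw [htr]; exact hp0
  -- the constant
  set T : ℝ := 2 ^ p + 1 with hT
  have hTpos : 0 < T := by positivity
  set c : ℝ := T ^ (-(1/p)) with hc
  have hcpos : 0 < c := Real.rpow_pos_of_pos hTpos _
  -- the vector
  refine ⟨(WithLp.equiv _ _).symm ![2 * c, c], ?_, ?_⟩
  · rw [PiLp.norm_eq_sum htr0]
    simp only [WithLp.equiv_symm_apply, PiLp.toLp_apply, htr, Fin.sum_univ_two]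
    norm_num [Real.norm_eq_abs]
    rw [abs_of_pos hcpos, Real.mul_rpow (by norm_num) hcpos.le]
    have h1 : (2:ℝ) ^ p * c ^ p + c ^ p = c ^ p * T := by ring
    rw [h1, Real.mul_rpow (by positivity) hTpos.le, hc,
      ← Real.rpow_mul hTpos.le, ← Real.rpow_mul hTpos.le, ← Real.rpow_add hTpos]
    rw [show -(1/p) * p * p⁻¹ + p⁻¹ = 0 by field_simp; ring, Real.rpow_zero]
  · intro u hv hu
    set v : PiLp (ENNReal.ofReal p) (fun _ : Fin 2 => ℝ) :=
      (WithLp.equiv _ _).symm ![2 * c, c] with hvdef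
    have hv0 : v 0 = 2 * c := rfl
    have hv1 : v 1 = c := rfl
    have hconv : ∀ x y : PiLp (ENNReal.ofReal p) (fun _ : Fin 2 => ℝ), ‖x‖ ≤ ‖y‖ →
        |x 0| ^ p + |x 1| ^ p ≤ |y 0| ^ p + |y 1| ^ p := by
      intro x y hxy
      rw [PiLp.norm_eq_sum htr0, PiLp.norm_eq_sum htr0] at hxy
      simp only [htr, Fin.sum_univ_two, Real.norm_eq_abs] at hxy
      exact (Real.rpow_le_rpow_iff (by positivity) (by positivity)
        (by positivity : (0:ℝ) < 1 / p)).mp hxy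
    have hx : ∀ x : ℝ, 0 < x → x ^ (p - 2) * x = x ^ (p - 1) := by
      intro x hx
      calc x ^ (p - 2) * x = x ^ (p - 2) * x ^ (1:ℝ) := by rw [Real.rpow_one]
        _ = x ^ (p - 2 + 1) := (Real.rpow_add hx _ _).symm
        _ = x ^ (p - 1) := by congr 1; ring
    have h2c : (0:ℝ) < 2 * c := by positivity
    -- first orthogonality relation
    have e1 : |2 * c| ^ (p - 2) * (2 * c) * u 0 + |c| ^ (p - 2) * c * u 1 = 0 := by
      apply key_deriv p hp
      intro l
      have := hconv v (v + l • u) (hv l)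
      simpa [hv0, hv1, PiLp.add_apply, PiLp.smul_apply, smul_eq_mul] using this
    rw [abs_of_pos h2c, abs_of_pos hcpos] at e1
    have hpow : (2 * c) ^ (p - 2) * (2 * c) = 2 ^ (p - 1) * c ^ (p - 1) := by
      rw [Real.mul_rpow (by norm_num : (0:ℝ) ≤ 2) hcpos.le]
      calc 2 ^ (p-2) * c ^ (p-2) * (2 * c) = (2 ^ (p-2) * 2) * (c ^ (p-2) * c) := by ring
        _ = 2 ^ (p-1) * c ^ (p-1) := by rw [hx 2 two_pos, hx c hcpos]
    rw [hpow, hx c hcpos] at e1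
    have hcp : (0:ℝ) < c ^ (p - 1) := Real.rpow_pos_of_pos hcpos _
    have E1 : 2 ^ (p - 1) * u 0 + u 1 = 0 := by
      have h' : c ^ (p - 1) * (2 ^ (p - 1) * u 0 + u 1) = 0 := by linear_combination e1
      rcases mul_eq_zero.mp h' with h'' | h''
      · exact absurd h'' (ne_of_gt hcp)
      · exact h''
    by_cases h0 : u 0 = 0
    · have h1 : u 1 = 0 := by simpa [h0] using E1
      rw [WithLp.ext_iff]; funext i
      fin_cases i
      · exact h0
      · exact h1
    · exfalso
      -- second orthogonality relation
      have e2 : |u 0| ^ (p - 2) * u 0 * (2 * c) + |u 1| ^ (p - 2) * u 1 * c = 0 := by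
        apply key_deriv p hp
        intro l
        have := hconv u (u + l • v) (hu l)
        simpa [hv0, hv1, PiLp.add_apply, PiLp.smul_apply, smul_eq_mul] using this
      have E2 : 2 * (|u 0| ^ (p - 2) * u 0) + |u 1| ^ (p - 2) * u 1 = 0 := by
        have h' : c * (2 * (|u 0| ^ (p - 2) * u 0) + |u 1| ^ (p - 2) * u 1) = 0 := by
          linear_combination e2
        rcases mul_eq_zero.mp h' with h'' | h''
        · exact absurd h'' (ne_of_gt hcpos)
        · exact h''
      have hu1 : u 1 = -(2 ^ (p - 1) * u 0) := by linarith [E1]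
      have h2p : (0:ℝ) < 2 ^ (p - 1) := Real.rpow_pos_of_pos two_pos _
      have habs : |u 1| = 2 ^ (p - 1) * |u 0| := by
        rw [hu1, abs_neg, abs_mul, abs_of_pos h2p]
      have habspow : |u 1| ^ (p - 2) = 2 ^ ((p-1) * (p-2)) * |u 0| ^ (p - 2) := by
        rw [habs, Real.mul_rpow h2p.le (abs_nonneg _),
          Real.rpow_mul (by norm_num : (0:ℝ) ≤ 2)]
      have hexp : (2:ℝ) ^ ((p-1)*(p-2)) * 2 ^ (p-1) = 2 ^ ((p-1)*(p-1)) := by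
        rw [← Real.rpow_add two_pos]
        ring_nf
      have E3 : (2 - 2 ^ ((p-1)*(p-1))) * (|u 0| ^ (p - 2) * u 0) = 0 := by
        have : |u 1| ^ (p - 2) * u 1 =
            -(2 ^ ((p-1)*(p-1)) * (|u 0| ^ (p - 2) * u 0)) := by
          rw [habspow, hu1, ← hexp]; ring
        rw [this] at E2
        linear_combination E2
      have hne : |u 0| ^ (p - 2) * u 0 ≠ 0 :=
        mul_ne_zero (ne_of_gt (Real.rpow_pos_of_pos (abs_pos.mpr h0) _)) h0
      have heq : (2:ℝ) ^ ((p-1)*(p-1)) = 2 ^ (1:ℝ) := by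
        rcases mul_eq_zero.mp E3 with h'' | h''
        · rw [Real.rpow_one]; linarith
        · exact absurd h'' hne
      have heq1 : (p-1)*(p-1) = 1 :=
        le_antisymm ((Real.rpow_le_rpow_left_iff one_lt_two).mp (le_of_eq heq))
          ((Real.rpow_le_rpow_left_iff one_lt_two).mp (ge_of_eq heq))
      have hpp : p * (p - 2) = 0 := by linear_combination heq1
      rcases mul_eq_zero.mp hpp with h'' | h''
      · exact hpne h''
      · exact hp2 (by linarith)
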